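/- An integral domain D is strongly Archimedean if and only if D is completely integrally closed. -/

import Mathlib

open scoped nonZeroDivisors

/-- `D` is completely integrally closed (w.r.t. a quotient field `K`). -/
def IsCompletelyIntegrallyClosed (D : Type*) [CommRing D] [IsDomain D]
    (K : Type*) [Field K] [Algebra D K] [IsFractionRing D K] : Prop :=
  ∀ x : K,
    (∃ r : D, r ≠ 0 ∧ ∀ n : ℕ, 1 ≤ n →
      ∃ d : D, algebraMap D K d = algebraMap D K r * x ^ n) →
    ∃ d : D, algebraMap D K d = x

/-- `D` is strongly Archimedean: for all `a b ∈ D` with `(b) ⊄ (a)`,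
`⋂_{n ≥ 1} (a/b)^n D = (0)` as fractional `D`-submodules of `K`. -/
def IsStronglyArchimedean (D : Type*) [CommRing D] [IsDomain D]
    (K : Type*) [Field K] [Algebra D K] [IsFractionRing D K] : Prop :=
  ∀ a b : D, ¬ (Ideal.span {b} ≤ Ideal.span {a}) →
    (⨅ (n : ℕ) (_ : 1 ≤ n),
      Submodule.span D {(algebraMap D K a / algebraMap D K b) ^ n}) = ⊥

/-- An integral domain is strongly Archimedean iff it is completely integrally closed. -/
theorem stmt_3 (D : Type*) [CommRing D] [IsDomain D]
    (K : Type*) [Field K] [Algebra D K] [IsFractionRing D K] :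
    IsStronglyArchimedean D K ↔ IsCompletelyIntegrallyClosed D K := by
  have hinj : Function.Injective (algebraMap D K) := IsFractionRing.injective D K
  constructor
  · rintro hSA x ⟨r, hr, hd⟩
    obtain ⟨a, b, hb, hx⟩ := IsFractionRing.div_surjective (A := D) x
    have hb0 : b ≠ 0 := nonZeroDivisors.ne_zero hb
    have hB : algebraMap D K b ≠ 0 := fun h => hb0 (hinj (by simpa using h))
    by_contra hnx
    push_neg at hnx
    have ha0 : a ≠ 0 := by
      rintro rfl
      exact hnx 0 (by simpa using hx)
    have hA : algebraMap D K a ≠ 0 := fun h => ha0 (hinj (by simpa using h))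
    have hnle : ¬ (Ideal.span {a} ≤ Ideal.span {b}) := by
      intro hle
      rw [Ideal.span_singleton_le_span_singleton] at hle
      obtain ⟨c, rfl⟩ := hle
      refine hnx c ?_
      rw [← hx, map_mul, mul_div_assoc, mul_comm]
      field_simp
    have hmem : algebraMap D K r ∈ (⨅ (n : ℕ) (_ : 1 ≤ n),
        Submodule.span D {(algebraMap D K b / algebraMap D K a) ^ n}) := by
      rw [Submodule.mem_iInf]
      intro n
      rw [Submodule.mem_iInf]
      intro hn
      obtain ⟨d, hdn⟩ := hd n hn
      rw [Submodule.mem_span_singleton]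
      refine ⟨d, ?_⟩
      rw [Algebra.smul_def, hdn, ← hx]
      field_simp
      rw [mul_assoc, ← mul_pow, div_mul_div_comm, mul_comm (algebraMap D K a), div_self (mul_ne_zero hB hA), one_pow, mul_one]
    rw [hSA b a hnle] at hmem
    simp only [Submodule.mem_bot] at hmem
    exact hr (hinj (by simpa using hmem))
  · intro hCIC a b hab
    rw [Ideal.span_singleton_le_span_singleton] at hab
    have hb0 : b ≠ 0 := by rintro rfl; exact hab (dvd_zero a)
    have hB : algebraMap D K b ≠ 0 := fun h => hb0 (hinj (by simpa using h))
    by_cases ha0 : a = 0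
    · subst ha0
      refine le_bot_iff.mp ?_
      refine le_trans (iInf_le _ 1) (le_trans (iInf_le _ le_rfl) ?_)
      simp
    have hA : algebraMap D K a ≠ 0 := fun h => ha0 (hinj (by simpa using h))
    rw [eq_bot_iff]
    intro y hy
    simp only [Submodule.mem_bot]
    by_contra hy0
    obtain ⟨p, q, hq, hpq⟩ := IsFractionRing.div_surjective (A := D) y
    have hq0 : q ≠ 0 := nonZeroDivisors.ne_zero hq
    have hQ : algebraMap D K q ≠ 0 := fun h => hq0 (hinj (by simpa using h))
    have hp0 : p ≠ 0 := by
      rintro rfl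
      apply hy0
      rw [← hpq]; simp
    have hall : ∀ n : ℕ, 1 ≤ n → ∃ d : D, algebraMap D K d =
        algebraMap D K p * (algebraMap D K b / algebraMap D K a) ^ n := by
      intro n hn
      have hyn := (Submodule.mem_iInf _).mp ((Submodule.mem_iInf _).mp hy n) hn
      rw [Submodule.mem_span_singleton] at hyn
      obtain ⟨d, hdn⟩ := hyn
      refine ⟨d * q, ?_⟩
      rw [Algebra.smul_def] at hdn
      rw [map_mul]
      have hp : algebraMap D K p = y * algebraMap D K q := by
        rw [← hpq]; field_simp
      rw [hp, ← hdn]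
      field_simp
      ring
      rw [mul_assoc (algebraMap D K d * algebraMap D K a ^ n), ← mul_pow (algebraMap D K b), mul_inv_cancel₀ hB, one_pow, mul_one, mul_assoc, ← mul_pow, mul_inv_cancel₀ hA, one_pow, mul_one]
    obtain ⟨e, he⟩ := hCIC (algebraMap D K b / algebraMap D K a) ⟨p, hp0, hall⟩
    apply hab
    refine ⟨e, hinj ?_⟩
    rw [map_mul, he]
    field_simp
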